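/- Let f : F_p^2 → ℚ be a function that is equidistributed in every direction (the sum of f along each line of each direction is the same constant for that direction) and whose sum along every line is zero. Then f is identically zero. -/
import Mathlib


/-- Sum of `f` over the line through `x` with direction vector `u`. -/
def lineSum (p : ℕ) [Fact p.Prime] (f : ZMod p × ZMod p → ℚ)
    (u x : ZMod p × ZMod p) : ℚ :=
  ∑ t : ZMod p, f (x + t • u)

/-- Direction vectors of the `p+1` directions: `some m` has slope `m`, `none` is vertical. -/
def dirVec (p : ℕ) : Option (ZMod p) → ZMod p × ZMod p
  | none => (0, 1)
  | some m => (1, m)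

/-- `f` is equidistributed in the direction of the vector `u`. -/
def FEquidistributed (p : ℕ) [Fact p.Prime] (f : ZMod p × ZMod p → ℚ)
    (u : ZMod p × ZMod p) : Prop :=
  ∀ x y : ZMod p × ZMod p, lineSum p f u x = lineSum p f u y

theorem stmt_11 (p : ℕ) [Fact p.Prime] (f : ZMod p × ZMod p → ℚ)
    (hequi : ∀ d : Option (ZMod p), FEquidistributed p f (dirVec p d))
    (hzero : ∀ (d : Option (ZMod p)) (x : ZMod p × ZMod p), lineSum p f (dirVec p d) x = 0) :
    f = 0 := by
  have hp : (p : ℚ) ≠ 0 := by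
    exact_mod_cast (Fact.out (p := p.Prime)).ne_zero
  -- total sum is zero
  have htot : ∑ y : ZMod p × ZMod p, f y = 0 := by
    have h1 : ∑ a : ZMod p, lineSum p f (dirVec p none) (a, 0) = 0 := by
      simp [hzero]
    rw [← h1, Fintype.sum_prod_type]
    refine Finset.sum_congr rfl fun a _ => ?_
    unfold lineSum dirVec
    refine Finset.sum_congr rfl fun t _ => ?_
    congr 1
    simp [Prod.ext_iff]
  funext x
  have hS : ∑ d : Option (ZMod p), lineSum p f (dirVec p d) x = 0 := by simp [hzero]
  have hsplit : ∀ d : Option (ZMod p), lineSum p f (dirVec p d) x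
      = f x + ∑ t ∈ Finset.univ.erase (0 : ZMod p), f (x + t • dirVec p d) := by
    intro d
    unfold lineSum
    rw [← Finset.add_sum_erase _ _ (Finset.mem_univ (0 : ZMod p))]
    simp
  have hbij : ∑ d : Option (ZMod p), ∑ t ∈ Finset.univ.erase (0 : ZMod p),
      f (x + t • dirVec p d)
      = ∑ v ∈ Finset.univ.erase (0 : ZMod p × ZMod p), f (x + v) := by
    rw [← Finset.sum_product']
    refine Finset.sum_nbij' (i := fun dt => dt.2 • dirVec p dt.1)
      (j := fun v => (if v.1 = 0 then none else some (v.2 / v.1),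
        if v.1 = 0 then v.2 else v.1)) ?_ ?_ ?_ ?_ ?_
    · rintro ⟨d, t⟩ hdt
      simp only [Finset.mem_product, Finset.mem_univ, Finset.mem_erase, true_and] at hdt ⊢
      match d with
      | none => simp [dirVec, Prod.ext_iff, hdt]
      | some m => simp [dirVec, Prod.ext_iff, hdt]
    · intro v hv
      simp only [Finset.mem_erase, Finset.mem_univ, and_true] at hv
      simp only [Finset.mem_product, Finset.mem_univ, Finset.mem_erase, true_and]
      by_cases h1 : v.1 = 0
      · simp only [h1, if_true]
        exact ⟨fun h2 => hv (Prod.ext h1 h2), trivial⟩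
      · simp [h1]
    · rintro ⟨d, t⟩ hdt
      simp only [Finset.mem_product, Finset.mem_univ, Finset.mem_erase, true_and] at hdt
      match d with
      | none => simp [dirVec]
      | some m =>
        obtain ⟨-, ht, -⟩ : True ∧ t ≠ 0 ∧ True := by tauto
        simp only [dirVec, Prod.smul_mk, smul_eq_mul, mul_one, if_neg ht]
        rw [mul_div_cancel_left₀ _ ht]
    · intro v hv
      simp only [Finset.mem_erase, Finset.mem_univ, and_true] at hv
      by_cases h1 : v.1 = 0
      · simp only [h1, if_true, dirVec, Prod.smul_mk, smul_eq_mul, mul_zero, mul_one]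
        exact Prod.ext h1.symm rfl
      · simp only [h1, if_false, dirVec, Prod.smul_mk, smul_eq_mul, mul_one]
        rw [mul_div_cancel₀ _ h1]
    · rintro ⟨d, t⟩ _
      rfl
  have hshift : ∑ v ∈ Finset.univ.erase (0 : ZMod p × ZMod p), f (x + v)
      = (∑ y : ZMod p × ZMod p, f y) - f x := by
    have h2 : ∑ v : ZMod p × ZMod p, f (x + v) = ∑ y : ZMod p × ZMod p, f y :=
      Fintype.sum_equiv (Equiv.addLeft x) _ _ fun v => rfl
    rw [Finset.sum_erase_eq_sub (Finset.mem_univ _), h2]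
    simp
  have hcard : (Finset.univ : Finset (Option (ZMod p))).card = p + 1 := by
    rw [Finset.card_univ, Fintype.card_option, ZMod.card]
  have : (0 : ℚ) = (p : ℚ) * f x := by
    calc (0 : ℚ) = ∑ d : Option (ZMod p), lineSum p f (dirVec p d) x := hS.symm
    _ = ∑ d : Option (ZMod p), (f x + ∑ t ∈ Finset.univ.erase (0 : ZMod p),
          f (x + t • dirVec p d)) := Finset.sum_congr rfl fun d _ => hsplit d
    _ = (p + 1 : ℕ) • f x + ((∑ y : ZMod p × ZMod p, f y) - f x) := by
        rw [Finset.sum_add_distrib, Finset.sum_const, hcard, hbij, hshift]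
    _ = (p : ℚ) * f x := by
        rw [htot]
        push_cast [nsmul_eq_mul]
        ring
  have := this.symm
  rw [mul_eq_zero] at this
  simpa using this.resolve_left hp
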